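/- Assume Ω satisfies the exterior d-cone condition at z₀=(x₀,t₀)∈∂Ω with constants M₀,r₀,θ>0, let λ∈(0,1) with t₀−λ>T₁, let b>0, and set δ(λ) = min{r₀², λ/√(1+M₀⁴)}. Then there exists a constant c>0, depending only on θ, M₀, b and the doubling constant c_d, such that for every z∈S with 0 < d̂(z₀,z)² ≤ δ(λ) one has M_λ(z₀,z) ≥ c·( log(1/d̂(z₀,z)²) − log(1/δ(λ)) ). -/

import Mathlib

open MeasureTheory Set
open scoped ENNReal NNReal

noncomputable section

/-- ℝ^N with Euclidean structure and Lebesgue measure. -/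
abbrev Vec (N : ℕ) := EuclideanSpace ℝ (Fin N)

/-- The `d`-ball `B(x,r) = {y : d(x,y) < r}`. -/
def dBall {N : ℕ} (d : Vec N → Vec N → ℝ) (x : Vec N) (r : ℝ) : Set (Vec N) :=
  {y | d x y < r}

/-- Lebesgue measure is doubling with respect to `d`, with doubling constant `cd`. -/
def Doubling {N : ℕ} (d : Vec N → Vec N → ℝ) (cd : ℝ) : Prop :=
  ∀ (x : Vec N) (r : ℝ), 0 < r →
    volume (dBall d x (2 * r)) ≤ ENNReal.ofReal cd * volume (dBall d x r)

/-- `d` is a metric on ℝ^N inducing the Euclidean topology (with bounded `d`-balls,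
as in assumption (D1) of the paper). -/
structure GoodMetric {N : ℕ} (d : Vec N → Vec N → ℝ) : Prop where
  nonneg : ∀ x y, 0 ≤ d x y
  eq_zero_iff : ∀ x y, d x y = 0 ↔ x = y
  symm : ∀ x y, d x y = d y x
  triangle : ∀ x y z, d x z ≤ d x y + d y z
  cont : Continuous fun p : Vec N × Vec N => d p.1 p.2
  finer : ∀ (x : Vec N) (ε : ℝ), 0 < ε → ∃ δ > 0, ∀ y, d x y < δ → dist x y < ε
  bounded : ∀ (x : Vec N) (r : ℝ), Bornology.IsBounded (dBall d x r)

/-- The strip `S = ℝ^N × (T₁,T₂)`. -/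
def strip (N : ℕ) (T₁ T₂ : EReal) : Set (Vec N × ℝ) :=
  {z | T₁ < (z.2 : EReal) ∧ (z.2 : EReal) < T₂}

/-- The `d`-Gaussian kernel of exponent `a`. -/
def gaussK {N : ℕ} (d : Vec N → Vec N → ℝ) (a : ℝ) (z ζ : Vec N × ℝ) : ℝ≥0∞ :=
  if ζ.2 < z.2 then
    (volume (dBall d z.1 (Real.sqrt (z.2 - ζ.2))))⁻¹ *
      ENNReal.ofReal (Real.exp (-a * d z.1 ζ.1 ^ 2 / (z.2 - ζ.2)))
  else 0

/-- Capacity of `F` with respect to the kernel `K`: supremum of total masses of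
nonnegative Radon measures supported in `F` whose `K`-potential is `≤ 1` on `X`. -/
def capac {α : Type*} [TopologicalSpace α] [MeasurableSpace α]
    (X : Set α) (K : α → α → ℝ≥0∞) (F : Set α) : ℝ≥0∞ :=
  ⨆ (μ : Measure α) (_ : μ.InnerRegular ∧ IsLocallyFiniteMeasure μ ∧ μ Fᶜ = 0 ∧
      ∀ z ∈ X, ∫⁻ ζ, K z ζ ∂μ ≤ 1), μ F

/-- The parabolic counterpart `d̂` of `d`. -/
def pdist {N : ℕ} (d : Vec N → Vec N → ℝ) (z ζ : Vec N × ℝ) : ℝ :=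
  (d z.1 ζ.1 ^ 4 + (z.2 - ζ.2) ^ 2) ^ (1 / 4 : ℝ)

/-- The parabolic ball `B̂(z,r)` (as a subset of ℝ^{N+1}). -/
def pBall {N : ℕ} (d : Vec N → Vec N → ℝ) (z : Vec N × ℝ) (r : ℝ) : Set (Vec N × ℝ) :=
  {ζ | pdist d z ζ < r}

/-- The ring-shaped set `Ω_k^h(z₀,λ)`. -/
def ringSet {N : ℕ} (d : Vec N → Vec N → ℝ) (S Ω : Set (Vec N × ℝ)) (z₀ : Vec N × ℝ)
    (lam : ℝ) (k h : ℤ) : Set (Vec N × ℝ) :=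
  {ζ ∈ S \ Ω | lam ^ (k + 1) ≤ z₀.2 - ζ.2 ∧ z₀.2 - ζ.2 ≤ lam ^ k ∧
    (1 / lam) ^ (h - 1) ≤ Real.exp (d z₀.1 ζ.1 ^ 2 / (z₀.2 - ζ.2)) ∧
    Real.exp (d z₀.1 ζ.1 ^ 2 / (z₀.2 - ζ.2)) ≤ (1 / lam) ^ h ∧
    pdist d z₀ ζ ≤ Real.sqrt lam}

/-- The set `D_k^h(z₀,λ)`. -/
def DSet {N : ℕ} (d : Vec N → Vec N → ℝ) (S Ω : Set (Vec N × ℝ)) (z₀ : Vec N × ℝ)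
    (lam : ℝ) (k h : ℤ) : Set (Vec N × ℝ) :=
  {ζ ∈ S \ Ω | lam ^ (k + 1) ≤ z₀.2 - ζ.2 ∧ z₀.2 - ζ.2 ≤ lam ^ k ∧
    Real.exp (d z₀.1 ζ.1 ^ 2 / (z₀.2 - ζ.2)) ≤ (1 / lam) ^ h ∧
    pdist d z₀ ζ ≤ Real.sqrt lam}

/-- The Wiener-type series `z_a^b(λ;s)`. -/
def zSeries {N : ℕ} (d : Vec N → Vec N → ℝ) (S Ω : Set (Vec N × ℝ)) (z₀ : Vec N × ℝ)
    (a b lam s : ℝ) : ℝ≥0∞ :=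
  ∑' k : ℕ, ∑' h : ℕ,
    if 1 ≤ k ∧ (k : ℝ) ≤ s ∧ 1 ≤ h then
      ENNReal.ofReal (lam ^ (b * (h : ℝ))) *
        capac S (gaussK d a) (DSet d S Ω z₀ lam (k : ℤ) (h : ℤ)) /
        volume (dBall d z₀.1 (lam ^ ((k : ℝ) / 2)))
    else 0

/-- The section `E_λ(ρ,τ)`. -/
def Eset {N : ℕ} (d : Vec N → Vec N → ℝ) (S Ω : Set (Vec N × ℝ)) (z₀ : Vec N × ℝ)
    (lam ρ τ : ℝ) : Set (Vec N) :=
  {x | (x, τ) ∈ S \ Ω ∧ pdist d z₀ (x, τ) ≤ Real.sqrt lam ∧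
    Real.exp (d z₀.1 x ^ 2 / (z₀.2 - τ)) ≤ ρ}

end
/-- Exterior `d`-cone condition at `z₀ = (x₀,t₀)`:
`|{x ∈ closure B(x₀,M₀r) : (x,t₀−r²) ∉ Ω}| ≥ θ |B(x₀,M₀r)|` for all `0 < r ≤ r₀`. -/
def ConeCond {N : ℕ} (d : Vec N → Vec N → ℝ) (Ω : Set (Vec N × ℝ)) (z₀ : Vec N × ℝ)
    (M₀ r₀ θ : ℝ) : Prop :=
  ∀ r : ℝ, 0 < r → r ≤ r₀ →
    ENNReal.ofReal θ * volume (dBall d z₀.1 (M₀ * r)) ≤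
      volume {x ∈ closure (dBall d z₀.1 (M₀ * r)) | (x, z₀.2 - r ^ 2) ∉ Ω}

/-- The function `M_λ(z₀,z)` of the paper. -/
noncomputable def Mfun {N : ℕ} (d : Vec N → Vec N → ℝ) (S Ω : Set (Vec N × ℝ)) (z₀ : Vec N × ℝ)
    (b lam : ℝ) (z : Vec N × ℝ) : ℝ≥0∞ :=
  ∫⁻ η in Set.Ioo (pdist d z₀ z ^ 2) lam,
    (∫⁻ ρ in Set.Ioi (1 : ℝ),
      volume (Eset d S Ω z₀ lam ρ (z₀.2 - η)) / volume (dBall d z₀.1 (Real.sqrt η)) *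
        ENNReal.ofReal (ρ ^ (-(1 + b)))) *
      ENNReal.ofReal η⁻¹

/-- Under the exterior `d`-cone condition, the quantity `M_λ(z₀,z)` grows
logarithmically as `z → z₀` (proof of Theorem 5.2 of the paper). -/
theorem stmt13 (θ M₀ b cd : ℝ) (hθ : 0 < θ) (hM₀ : 0 < M₀) (hb : 0 < b)
    (hcd : 1 < cd) :
    ∃ c : ℝ, 0 < c ∧
      ∀ (N : ℕ), 1 ≤ N → ∀ d : Vec N → Vec N → ℝ, GoodMetric d → Doubling d cd →
      ∀ T₁ T₂ : EReal, T₁ < T₂ →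
      ∀ Ω : Set (Vec N × ℝ), IsOpen Ω → Bornology.IsBounded Ω →
        closure Ω ⊆ strip N T₁ T₂ →
      ∀ z₀ : Vec N × ℝ, z₀ ∈ frontier Ω →
      ∀ r₀ : ℝ, 0 < r₀ → ConeCond d Ω z₀ M₀ r₀ θ →
      ∀ lam : ℝ, lam ∈ Set.Ioo 0 1 → T₁ < ((z₀.2 - lam : ℝ) : EReal) →
      ∀ z : Vec N × ℝ, z ∈ strip N T₁ T₂ → 0 < pdist d z₀ z →
        pdist d z₀ z ^ 2 ≤ min (r₀ ^ 2) (lam / Real.sqrt (1 + M₀ ^ 4)) →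
        ENNReal.ofReal (c * (Real.log (1 / pdist d z₀ z ^ 2) -
            Real.log (1 / min (r₀ ^ 2) (lam / Real.sqrt (1 + M₀ ^ 4))))) ≤
          Mfun d (strip N T₁ T₂) Ω z₀ b lam z := by

  classical
  set n : ℕ := ⌈1 / M₀⌉₊ with hn
  set ρ₀ : ℝ := Real.exp (M₀ ^ 2) with hρ₀def
  have hcd0 : (0:ℝ) < cd := lt_trans one_pos hcd
  have hρ₀1 : 1 < ρ₀ := by
    rw [hρ₀def]
    exact Real.one_lt_exp_iff.mpr (by positivity)
  set θ' : ℝ := θ / cd ^ n with hθ'def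
  have hθ'pos : 0 < θ' := div_pos hθ (pow_pos hcd0 n)
  set c₁ : ℝ := (ρ₀ + 1) ^ (-(1 + b)) with hc₁def
  have hc₁pos : 0 < c₁ := Real.rpow_pos_of_pos (by linarith) _
  refine ⟨θ' * c₁, mul_pos hθ'pos hc₁pos, ?_⟩
  intro N hN d gm doub T₁ T₂ hT Ω hΩopen hΩbd hcl z₀ hz₀ r₀ hr₀ hcone lam hlam hT₁lam
    z hzS hpz hpz2
  set δ : ℝ := min (r₀ ^ 2) (lam / Real.sqrt (1 + M₀ ^ 4)) with hδdef
  set s : ℝ := pdist d z₀ z ^ 2 with hsdef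
  have hs0 : 0 < s := pow_pos hpz 2
  have hKpos : (0:ℝ) < Real.sqrt (1 + M₀ ^ 4) := Real.sqrt_pos.mpr (by positivity)
  have hK2 : Real.sqrt (1 + M₀ ^ 4) ^ 2 = 1 + M₀ ^ 4 := Real.sq_sqrt (by positivity)
  have hK1 : (1:ℝ) ≤ Real.sqrt (1 + M₀ ^ 4) := by nlinarith
  have hdel_le : δ ≤ lam :=
    le_trans (min_le_right _ _) (div_le_self hlam.1.le hK1)
  have hδpos : 0 < δ := lt_of_lt_of_le hs0 hpz2
  rcases eq_or_lt_of_le hpz2 with heq | hlt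
  · rw [← heq]
    simp
  -- auxiliary facts about d-balls
  have hdxx : ∀ x : Vec N, d x x = 0 := fun x => (gm.eq_zero_iff x x).mpr rfl
  have ballpos : ∀ (x : Vec N) (r : ℝ), 0 < r → 0 < volume (dBall d x r) := by
    intro x r hr
    have hco : Continuous fun y => d x y := gm.cont.comp (Continuous.prodMk_right x)
    have hopen : IsOpen (dBall d x r) := isOpen_Iio.preimage hco
    exact hopen.measure_pos volume ⟨x, by simpa [dBall, hdxx x] using hr⟩
  have ballfin : ∀ (x : Vec N) (r : ℝ), volume (dBall d x r) < ⊤ :=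
    fun x r => (gm.bounded x r).measure_lt_top
  have balliter : ∀ (k : ℕ) (x : Vec N) (r : ℝ), 0 < r →
      volume (dBall d x (2 ^ k * r)) ≤ ENNReal.ofReal cd ^ k * volume (dBall d x r) := by
    intro k
    induction k with
    | zero => intro x r hr; simp
    | succ k ih =>
      intro x r hr
      have h1 : (2:ℝ) ^ (k+1) * r = 2 ^ k * (2 * r) := by ring
      rw [h1]
      calc volume (dBall d x (2 ^ k * (2 * r)))
          ≤ ENNReal.ofReal cd ^ k * volume (dBall d x (2 * r)) := ih x (2*r) (by linarith)
        _ ≤ ENNReal.ofReal cd ^ k * (ENNReal.ofReal cd * volume (dBall d x r)) :=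
            mul_le_mul_right (doub x r hr) _
        _ = ENNReal.ofReal cd ^ (k+1) * volume (dBall d x r) := by ring
  -- the key pointwise estimate
  have hkey : ∀ η ∈ Ioo s δ, ∀ ρ ∈ Ioo ρ₀ (ρ₀+1),
      ENNReal.ofReal θ' ≤ volume (Eset d (strip N T₁ T₂) Ω z₀ lam ρ (z₀.2 - η)) /
        volume (dBall d z₀.1 (Real.sqrt η)) := by
    intro η hη ρ hρ
    have hη0 : 0 < η := lt_trans hs0 hη.1
    set r : ℝ := Real.sqrt η with hrdef
    have hr0 : 0 < r := Real.sqrt_pos.mpr hη0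
    have hr2 : r ^ 2 = η := Real.sq_sqrt hη0.le
    have hηδ : η < δ := hη.2
    have hrr₀ : r ≤ r₀ := by
      rw [hrdef]
      calc Real.sqrt η ≤ Real.sqrt (r₀ ^ 2) :=
            Real.sqrt_le_sqrt (le_trans hηδ.le (min_le_left _ _))
        _ = r₀ := Real.sqrt_sq hr₀.le
    have hco := hcone r hr0 hrr₀
    have hMr : 0 < M₀ * r := mul_pos hM₀ hr0
    have hclsub : closure (dBall d z₀.1 (M₀ * r)) ⊆ {y | d z₀.1 y ≤ M₀ * r} := by
      apply closure_minimal
      · intro y hy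
        simp only [dBall, Set.mem_setOf_eq] at hy ⊢
        exact hy.le
      · have hco2 : Continuous fun y => d z₀.1 y := gm.cont.comp (Continuous.prodMk_right _)
        exact isClosed_Iic.preimage hco2
    have heta_lamK : η ≤ lam / Real.sqrt (1 + M₀ ^ 4) := le_trans hηδ.le (min_le_right _ _)
    have heta_lam : η ≤ lam := le_trans heta_lamK (div_le_self hlam.1.le hK1)
    have hsub : {x ∈ closure (dBall d z₀.1 (M₀ * r)) | (x, z₀.2 - r ^ 2) ∉ Ω} ⊆
        Eset d (strip N T₁ T₂) Ω z₀ lam ρ (z₀.2 - η) := by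
      rintro x ⟨hx1, hx2⟩
      rw [hr2] at hx2
      have hdx : d z₀.1 x ≤ M₀ * r := hclsub hx1
      have hdx0 : 0 ≤ d z₀.1 x := gm.nonneg _ _
      have hz₀S : z₀ ∈ strip N T₁ T₂ := hcl (frontier_subset_closure hz₀)
      have hKη : η * Real.sqrt (1 + M₀ ^ 4) ≤ lam := (le_div_iff₀ hKpos).mp heta_lamK
      have hd4 : d z₀.1 x ^ 4 ≤ M₀ ^ 4 * η ^ 2 := by
        calc d z₀.1 x ^ 4 ≤ (M₀ * r) ^ 4 := pow_le_pow_left₀ hdx0 hdx 4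
          _ = M₀ ^ 4 * η ^ 2 := by
              rw [mul_pow, show r ^ 4 = (r ^ 2) ^ 2 by ring, hr2]
      have hsq : (η * Real.sqrt (1 + M₀ ^ 4)) ^ 2 ≤ lam ^ 2 :=
        pow_le_pow_left₀ (by positivity) hKη 2
      have hη2 : η ^ 2 * (1 + M₀ ^ 4) ≤ lam ^ 2 := by
        rw [mul_pow, hK2] at hsq; exact hsq
      have hd2 : d z₀.1 x ^ 2 ≤ M₀ ^ 2 * η := by
        have := pow_le_pow_left₀ hdx0 hdx 2
        rw [mul_pow, hr2] at this; exact this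
      simp only [Eset, Set.mem_setOf_eq, Set.mem_diff, strip, Prod.fst, Prod.snd,
        sub_sub_cancel, pdist]
      refine ⟨⟨⟨?_, ?_⟩, hx2⟩, ?_, ?_⟩
      · exact lt_of_lt_of_le hT₁lam (EReal.coe_le_coe_iff.mpr (by linarith))
      · exact lt_trans (EReal.coe_lt_coe_iff.mpr (by linarith)) hz₀S.2
      · calc (d z₀.1 x ^ 4 + η ^ 2) ^ (1/4 : ℝ)
            ≤ (lam ^ 2) ^ (1/4 : ℝ) :=
              Real.rpow_le_rpow (by positivity) (by nlinarith) (by norm_num)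
          _ = Real.sqrt lam := by
              rw [Real.sqrt_eq_rpow, ← Real.rpow_natCast lam 2,
                ← Real.rpow_mul hlam.1.le]
              norm_num
      · have hdiv : d z₀.1 x ^ 2 / η ≤ M₀ ^ 2 := by
          rw [div_le_iff₀ hη0]; linarith
        calc Real.exp (d z₀.1 x ^ 2 / η) ≤ Real.exp (M₀ ^ 2) := Real.exp_le_exp.mpr hdiv
          _ ≤ ρ := hρ.1.le
    have hEV : ENNReal.ofReal θ * volume (dBall d z₀.1 (M₀ * r)) ≤
        volume (Eset d (strip N T₁ T₂) Ω z₀ lam ρ (z₀.2 - η)) :=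
      le_trans hco (measure_mono hsub)
    have hBle : volume (dBall d z₀.1 r) ≤
        ENNReal.ofReal cd ^ n * volume (dBall d z₀.1 (M₀ * r)) := by
      have h1 : 1 / M₀ ≤ (n:ℝ) := Nat.le_ceil _
      have h2 : (n:ℝ) ≤ 2 ^ n := by exact_mod_cast (Nat.lt_two_pow_self (n := n)).le
      rw [div_le_iff₀ hM₀] at h1
      have h2n : (1:ℝ) ≤ 2 ^ n * M₀ := by
        have h3 := mul_le_mul_of_nonneg_right h2 hM₀.le
        linarith
      have h4 := mul_le_mul_of_nonneg_right h2n hr0.le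
      have hsub2 : dBall d z₀.1 r ⊆ dBall d z₀.1 (2 ^ n * (M₀ * r)) := by
        intro y hy
        simp only [dBall, Set.mem_setOf_eq] at hy ⊢
        have : r ≤ 2 ^ n * (M₀ * r) := by linarith [h4]
        linarith
      exact le_trans (measure_mono hsub2) (balliter n z₀.1 (M₀ * r) hMr)
    rw [ENNReal.le_div_iff_mul_le (Or.inl (ballpos _ _ hr0).ne') (Or.inl (ballfin _ _).ne)]
    calc ENNReal.ofReal θ' * volume (dBall d z₀.1 r)
        ≤ ENNReal.ofReal θ' * (ENNReal.ofReal cd ^ n * volume (dBall d z₀.1 (M₀ * r))) :=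
          mul_le_mul_right hBle _
      _ = ENNReal.ofReal (θ' * cd ^ n) * volume (dBall d z₀.1 (M₀ * r)) := by
          rw [ENNReal.ofReal_mul hθ'pos.le, ENNReal.ofReal_pow hcd0.le]; ring
      _ = ENNReal.ofReal θ * volume (dBall d z₀.1 (M₀ * r)) := by
          rw [hθ'def, div_mul_cancel₀ _ (pow_pos hcd0 n).ne']
      _ ≤ _ := hEV
  -- lower bound for the inner integral
  have hinner : ∀ η ∈ Ioo s δ, ENNReal.ofReal (θ' * c₁) ≤
      ∫⁻ ρ in Ioi (1:ℝ), volume (Eset d (strip N T₁ T₂) Ω z₀ lam ρ (z₀.2 - η)) /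
        volume (dBall d z₀.1 (Real.sqrt η)) * ENNReal.ofReal (ρ ^ (-(1 + b))) := by
    intro η hη
    have hsubI : Ioo ρ₀ (ρ₀+1) ⊆ Ioi (1:ℝ) := fun ρ hρ => lt_trans hρ₀1 hρ.1
    refine le_trans ?_ (lintegral_mono_set hsubI)
    have hconst : ENNReal.ofReal (θ' * c₁) =
        ∫⁻ _ρ in Ioo ρ₀ (ρ₀+1), ENNReal.ofReal θ' * ENNReal.ofReal c₁ := by
      rw [setLIntegral_const, Real.volume_Ioo, ← ENNReal.ofReal_mul hθ'pos.le]
      simp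
    rw [hconst]
    apply setLIntegral_mono' measurableSet_Ioo
    intro ρ hρ
    refine mul_le_mul' (hkey η hη ρ hρ) (ENNReal.ofReal_le_ofReal ?_)
    exact Real.rpow_le_rpow_of_nonpos (by linarith [hρ.1, hρ₀1]) hρ.2.le (by linarith)
  -- assemble
  have hAne : ENNReal.ofReal (θ' * c₁) ≠ ⊤ := ENNReal.ofReal_ne_top
  have step1 : ∫⁻ η in Ioo s δ, ENNReal.ofReal (θ' * c₁) * ENNReal.ofReal η⁻¹ ≤
      Mfun d (strip N T₁ T₂) Ω z₀ b lam z := by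
    rw [Mfun]
    refine le_trans ?_ (lintegral_mono_set (Ioo_subset_Ioo le_rfl hdel_le))
    exact setLIntegral_mono' measurableSet_Ioo fun η hη =>
      mul_le_mul_left (hinner η hη) _
  have hcont : ContinuousOn (fun x : ℝ => x⁻¹) (Icc s δ) :=
    ContinuousOn.inv₀ continuousOn_id fun x hx => (lt_of_lt_of_le hs0 hx.1).ne'
  have hint : IntegrableOn (fun x : ℝ => x⁻¹) (Ioo s δ) volume :=
    (hcont.integrableOn_compact isCompact_Icc).mono_set Ioo_subset_Icc_self
  have heq : ∫⁻ η in Ioo s δ, ENNReal.ofReal η⁻¹ = ENNReal.ofReal (∫ η in Ioo s δ, η⁻¹) :=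
    (MeasureTheory.ofReal_integral_eq_lintegral_ofReal hint
      ((ae_restrict_iff' measurableSet_Ioo).mpr
        (ae_of_all _ fun x hx => inv_nonneg.mpr (lt_trans hs0 hx.1).le))).symm
  have hval : ∫ η in Ioo s δ, η⁻¹ = Real.log δ - Real.log s := by
    rw [← MeasureTheory.integral_Ioc_eq_integral_Ioo,
      ← intervalIntegral.integral_of_le hlt.le, integral_inv_of_pos hs0 hδpos,
      Real.log_div hδpos.ne' hs0.ne']
  have step3 : ENNReal.ofReal (Real.log δ - Real.log s) =
      ∫⁻ η in Ioo s δ, ENNReal.ofReal η⁻¹ := by rw [heq, hval]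
  calc ENNReal.ofReal (θ' * c₁ * (Real.log (1 / s) - Real.log (1 / δ)))
      = ENNReal.ofReal (θ' * c₁) * ENNReal.ofReal (Real.log δ - Real.log s) := by
        rw [← ENNReal.ofReal_mul (mul_pos hθ'pos hc₁pos).le]
        congr 1
        rw [one_div, one_div, Real.log_inv, Real.log_inv]
        ring
    _ = ENNReal.ofReal (θ' * c₁) * ∫⁻ η in Ioo s δ, ENNReal.ofReal η⁻¹ := by rw [step3]
    _ = ∫⁻ η in Ioo s δ, ENNReal.ofReal (θ' * c₁) * ENNReal.ofReal η⁻¹ :=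
        (lintegral_const_mul' _ _ hAne).symm
    _ ≤ Mfun d (strip N T₁ T₂) Ω z₀ b lam z := step1
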